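/- On ℝ⁶ with standard basis e₁,…,e₆ and coordinates x = (x₁,…,x₆), define the vector fields X₁(x) = e₄ − x₆·e₃, X₂(x) = e₅ − x₄·e₁, X₃(x) = e₆ − x₅·e₂. Then for every x ∈ ℝ⁶, the six vectors X₁(x), X₂(x), X₃(x), ⁅X₁,X₂⁆(x), ⁅X₂,X₃⁆(x), ⁅X₃,X₁⁆(x) span ℝ⁶. -/

import Mathlib

open ContinuousLinearMap in
lemma fderiv_aux12 (a b : Fin 6 → ℝ) (i : Fin 6) (x : Fin 6 → ℝ) :
    fderiv ℝ (fun x : Fin 6 → ℝ => a - x i • b) x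
      = -((proj i : (Fin 6 → ℝ) →L[ℝ] ℝ).smulRight b) := by
  have h1 : HasFDerivAt (fun x : Fin 6 → ℝ => x i)
      (proj i : (Fin 6 → ℝ) →L[ℝ] ℝ) x := hasFDerivAt_apply i x
  have h : HasFDerivAt (fun x : Fin 6 → ℝ => a - x i • b)
      (-((proj i : (Fin 6 → ℝ) →L[ℝ] ℝ).smulRight b)) x := by
    have : HasFDerivAt (fun x : Fin 6 → ℝ => a - x i • b) _ x :=
      (hasFDerivAt_const a x).sub (h1.smul (hasFDerivAt_const b x))
    refine this.congr_fderiv ?_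
    ext v
    simp
  exact h.fderiv


/-- For the vector fields `X₁ = e₄ − x₆·e₃`, `X₂ = e₅ − x₄·e₁`, `X₃ = e₆ − x₅·e₂` on `ℝ⁶`,
the three fields together with their pairwise Lie brackets span `ℝ⁶` at every point. -/
theorem stmt_12
    (X₁ X₂ X₃ : (Fin 6 → ℝ) → (Fin 6 → ℝ))
    (hX₁ : ∀ x, X₁ x = (Pi.single 3 1 : Fin 6 → ℝ) - x 5 • (Pi.single 2 1 : Fin 6 → ℝ))
    (hX₂ : ∀ x, X₂ x = (Pi.single 4 1 : Fin 6 → ℝ) - x 3 • (Pi.single 0 1 : Fin 6 → ℝ))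
    (hX₃ : ∀ x, X₃ x = (Pi.single 5 1 : Fin 6 → ℝ) - x 4 • (Pi.single 1 1 : Fin 6 → ℝ)) :
    ∀ x : Fin 6 → ℝ,
      Submodule.span ℝ
        ({X₁ x, X₂ x, X₃ x,
          VectorField.lieBracket ℝ X₁ X₂ x,
          VectorField.lieBracket ℝ X₂ X₃ x,
          VectorField.lieBracket ℝ X₃ X₁ x} : Set (Fin 6 → ℝ)) = ⊤ := by
  have e₁ : X₁ = fun x : Fin 6 → ℝ => (Pi.single 3 1 : Fin 6 → ℝ) - x 5 • (Pi.single 2 1 : Fin 6 → ℝ) := funext hX₁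
  have e₂ : X₂ = fun x : Fin 6 → ℝ => (Pi.single 4 1 : Fin 6 → ℝ) - x 3 • (Pi.single 0 1 : Fin 6 → ℝ) := funext hX₂
  have e₃ : X₃ = fun x : Fin 6 → ℝ => (Pi.single 5 1 : Fin 6 → ℝ) - x 4 • (Pi.single 1 1 : Fin 6 → ℝ) := funext hX₃
  intro x
  have d₁ := fderiv_aux12 (Pi.single 3 1) (Pi.single 2 1) 5 x
  have d₂ := fderiv_aux12 (Pi.single 4 1) (Pi.single 0 1) 3 x
  have d₃ := fderiv_aux12 (Pi.single 5 1) (Pi.single 1 1) 4 x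
  have b₁₂ : VectorField.lieBracket ℝ X₁ X₂ x = -(Pi.single 0 1 : Fin 6 → ℝ) := by
    rw [VectorField.lieBracket, e₁, e₂, d₁, d₂]
    ext j
    simp [Pi.single_apply, ContinuousLinearMap.smulRight_apply]
  have b₂₃ : VectorField.lieBracket ℝ X₂ X₃ x = -(Pi.single 1 1 : Fin 6 → ℝ) := by
    rw [VectorField.lieBracket, e₂, e₃, d₂, d₃]
    ext j
    simp [Pi.single_apply, ContinuousLinearMap.smulRight_apply]
  have b₃₁ : VectorField.lieBracket ℝ X₃ X₁ x = -(Pi.single 2 1 : Fin 6 → ℝ) := by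
    rw [VectorField.lieBracket, e₃, e₁, d₃, d₁]
    ext j
    simp [Pi.single_apply, ContinuousLinearMap.smulRight_apply]
  rw [hX₁, hX₂, hX₃, b₁₂, b₂₃, b₃₁]
  set S : Set (Fin 6 → ℝ) :=
    ({(Pi.single 3 1 : Fin 6 → ℝ) - x 5 • (Pi.single 2 1 : Fin 6 → ℝ),
      (Pi.single 4 1 : Fin 6 → ℝ) - x 3 • (Pi.single 0 1 : Fin 6 → ℝ),
      (Pi.single 5 1 : Fin 6 → ℝ) - x 4 • (Pi.single 1 1 : Fin 6 → ℝ),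
      -(Pi.single 0 1 : Fin 6 → ℝ), -(Pi.single 1 1 : Fin 6 → ℝ),
      -(Pi.single 2 1 : Fin 6 → ℝ)} : Set (Fin 6 → ℝ)) with hS
  have m0 : (Pi.single 0 1 : Fin 6 → ℝ) ∈ Submodule.span ℝ S := by
    have : -(Pi.single 0 1 : Fin 6 → ℝ) ∈ S := by simp [hS]
    simpa using (Submodule.span ℝ S).neg_mem (Submodule.subset_span this)
  have m1 : (Pi.single 1 1 : Fin 6 → ℝ) ∈ Submodule.span ℝ S := by
    have : -(Pi.single 1 1 : Fin 6 → ℝ) ∈ S := by simp [hS]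
    simpa using (Submodule.span ℝ S).neg_mem (Submodule.subset_span this)
  have m2 : (Pi.single 2 1 : Fin 6 → ℝ) ∈ Submodule.span ℝ S := by
    have : -(Pi.single 2 1 : Fin 6 → ℝ) ∈ S := by simp [hS]
    simpa using (Submodule.span ℝ S).neg_mem (Submodule.subset_span this)
  have m3 : (Pi.single 3 1 : Fin 6 → ℝ) ∈ Submodule.span ℝ S := by
    have h : (Pi.single 3 1 : Fin 6 → ℝ) - x 5 • (Pi.single 2 1 : Fin 6 → ℝ) ∈ S := by simp [hS]
    have := (Submodule.span ℝ S).add_mem (Submodule.subset_span h)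
      ((Submodule.span ℝ S).smul_mem (x 5) m2)
    simpa using this
  have m4 : (Pi.single 4 1 : Fin 6 → ℝ) ∈ Submodule.span ℝ S := by
    have h : (Pi.single 4 1 : Fin 6 → ℝ) - x 3 • (Pi.single 0 1 : Fin 6 → ℝ) ∈ S := by simp [hS]
    have := (Submodule.span ℝ S).add_mem (Submodule.subset_span h)
      ((Submodule.span ℝ S).smul_mem (x 3) m0)
    simpa using this
  have m5 : (Pi.single 5 1 : Fin 6 → ℝ) ∈ Submodule.span ℝ S := by
    have h : (Pi.single 5 1 : Fin 6 → ℝ) - x 4 • (Pi.single 1 1 : Fin 6 → ℝ) ∈ S := by simp [hS]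
    have := (Submodule.span ℝ S).add_mem (Submodule.subset_span h)
      ((Submodule.span ℝ S).smul_mem (x 4) m1)
    simpa using this
  rw [eq_top_iff, ← (Pi.basisFun ℝ (Fin 6)).span_eq, Submodule.span_le]
  rintro v ⟨i, rfl⟩
  fin_cases i <;> simpa [Pi.basisFun_apply] using (by assumption : _)
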